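/- Let A be a weighted directed graph on n vertices that is simply forward influenced, and suppose s : Fin n → ℝ satisfies M̃.mulVec s = d̃ (s is a trophic level vector). Then the total edge weight W = ∑ i, ∑ j, A i j is positive and the edge-weighted mean of the trophic differences equals 1, i.e. (∑ i, ∑ j, A i j * (s j − s i)) / W = 1. -/

import Mathlib

open Matrix BigOperators

noncomputable section

variable {n : ℕ}

/-- Weighted in-degree vector. -/
def indeg (A : Matrix (Fin n) (Fin n) ℝ) (j : Fin n) : ℝ := ∑ i, A i j

/-- Weighted out-degree vector. -/
def outdeg (A : Matrix (Fin n) (Fin n) ℝ) (i : Fin n) : ℝ := ∑ j, A i j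

/-- Weighted in-degree Laplacian `L = diag d - A`. -/
def inLap (A : Matrix (Fin n) (Fin n) ℝ) : Matrix (Fin n) (Fin n) ℝ :=
  Matrix.diagonal (indeg A) - A

/-- Reachability: reflexive-transitive closure of the edge relation. -/
def Reaches (A : Matrix (Fin n) (Fin n) ℝ) : Fin n → Fin n → Prop :=
  Relation.ReflTransGen fun i j => 0 < A i j

/-- Weak connectivity. -/
def WeaklyConnected (A : Matrix (Fin n) (Fin n) ℝ) : Prop :=
  ∀ i j : Fin n, Relation.ReflTransGen (fun i j => 0 < A i j ∨ 0 < A j i) i j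

/-- Strong connectivity. -/
def StronglyConnected (A : Matrix (Fin n) (Fin n) ℝ) : Prop :=
  ∀ i j : Fin n, Reaches A i j

/-- Simply forward influenced graph. -/
def SimplyForwardInfluenced (A : Matrix (Fin n) (Fin n) ℝ) : Prop :=
  (∃ i, indeg A i = 0) ∧ (∃ i, indeg A i ≠ 0) ∧
    ∀ j, indeg A j ≠ 0 → ∃ i, indeg A i = 0 ∧ Reaches A i j

/-- A set of vertices with no incoming edges from outside. -/
def InClosed (A : Matrix (Fin n) (Fin n) ℝ) (S : Finset (Fin n)) : Prop :=
  ∀ i j : Fin n, i ∉ S → j ∈ S → A i j = 0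

/-- Minimal source subgraph. -/
def MinSourceSubgraph (A : Matrix (Fin n) (Fin n) ℝ) (S : Finset (Fin n)) : Prop :=
  S.Nonempty ∧ InClosed A S ∧ ∀ T ⊆ S, T.Nonempty → T ≠ S → ¬ InClosed A T

/-- Total edge weight. -/
def totalWeight (A : Matrix (Fin n) (Fin n) ℝ) : ℝ := ∑ i, ∑ j, A i j

/-- `g` is a forward hierarchical level vector: a minimizer of `‖Lᵀ x - d‖₂`. -/
def IsFHL (A : Matrix (Fin n) (Fin n) ℝ) (g : Fin n → ℝ) : Prop :=
  ∀ x : Fin n → ℝ,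
    ∑ i, ((inLap A)ᵀ.mulVec g i - indeg A i) ^ 2 ≤
      ∑ i, ((inLap A)ᵀ.mulVec x i - indeg A i) ^ 2

/-- Forward democracy coefficient, computed from a forward hierarchical level vector `g`. -/
def etaF (A : Matrix (Fin n) (Fin n) ℝ) (g : Fin n → ℝ) : ℝ :=
  1 - (∑ i, ∑ j, A i j * (g j - g i)) / totalWeight A

/-- Forward influence centrality of a vertex, from a forward hierarchical level vector `g`. -/
def vF (A : Matrix (Fin n) (Fin n) ℝ) (g : Fin n → ℝ) (i : Fin n) : ℝ :=
  if indeg A i = 0 then 1 else 1 - (∑ k, A k i * (g i - g k)) / indeg A i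

/-- `b` is the orthogonal projection of `d` onto `ker L` (standard Euclidean inner product). -/
def IsProjKerL (A : Matrix (Fin n) (Fin n) ℝ) (b : Fin n → ℝ) : Prop :=
  (inLap A).mulVec b = 0 ∧
    ∀ x : Fin n → ℝ, (inLap A).mulVec x = 0 → ∑ i, (indeg A i - b i) * x i = 0

theorem stmt_4 (hn : 0 < n) (A : Matrix (Fin n) (Fin n) ℝ)
    (hA : ∀ i j, 0 ≤ A i j) (hdiag : ∀ i, A i i = 0)
    (hsfi : SimplyForwardInfluenced A) (s : Fin n → ℝ)
    (hs : (Matrix.diagonal (fun j => if 0 < indeg A j then indeg A j else 1) - A)ᵀ.mulVec s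
        = fun j => if 0 < indeg A j then indeg A j else 1) :
    0 < totalWeight A ∧ (∑ i, ∑ j, A i j * (s j - s i)) / totalWeight A = 1 := by
  obtain ⟨-, ⟨i0, hi0⟩, -⟩ := hsfi
  have hd : ∀ j, 0 ≤ indeg A j := fun j => Finset.sum_nonneg fun i _ => hA i j
  have hkey : ∀ j, indeg A j * s j - ∑ i, A i j * s i = indeg A j := by
    intro j
    have h := congrFun hs j
    simp only [Matrix.mulVec, dotProduct, Matrix.transpose_apply, Matrix.sub_apply,
      Matrix.diagonal_apply, sub_mul, Finset.sum_sub_distrib, ite_mul, zero_mul,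
      Finset.sum_ite_eq', Finset.mem_univ, if_true] at h
    by_cases h0 : 0 < indeg A j
    · simpa [h0] using h
    · have hz : indeg A j = 0 := le_antisymm (not_lt.mp h0) (hd j)
      have hAz : ∀ i, A i j = 0 := by
        intro i
        have := (Finset.sum_eq_zero_iff_of_nonneg (fun i _ => hA i j)).mp hz
        exact this i (Finset.mem_univ i)
      simp [hz, hAz]
  have hWd : totalWeight A = ∑ j, indeg A j := by
    rw [totalWeight]; exact Finset.sum_comm
  have hi0pos : 0 < indeg A i0 := lt_of_le_of_ne (hd i0) (Ne.symm hi0)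
  have hW : 0 < totalWeight A := by
    rw [hWd]
    exact Finset.sum_pos' (fun j _ => hd j) ⟨i0, Finset.mem_univ i0, hi0pos⟩
  have hnum : ∑ i, ∑ j, A i j * (s j - s i) = totalWeight A := by
    rw [Finset.sum_comm, hWd]
    refine Finset.sum_congr rfl fun j _ => ?_
    rw [← hkey j]
    simp [mul_sub, Finset.sum_sub_distrib, indeg, Finset.sum_mul]
  exact ⟨hW, by rw [hnum, div_self (ne_of_gt hW)]⟩
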